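/- For S ∈ CC(X), the multiplication satisfies μ(S) = conv( ⋃_{Φ ∈ UB(S)} { Σ_{U ∈ supp Φ} Φ(U)·d : d ∈ UB(U) } ), i.e., μ(S) is generated by combining the unique bases at both levels. -/

import Mathlib

def IsDist {X : Type*} (d : X →₀ ℝ) : Prop :=
  (∀ x, 0 ≤ d x) ∧ d.sum (fun _ v => v) = 1

def IsBase {V : Type*} [AddCommGroup V] [Module ℝ V] (S B : Set V) : Prop :=
  B.Finite ∧ S = convexHull ℝ B ∧ ∀ d ∈ B, d ∉ convexHull ℝ (B \ {d})

def InC {X : Type*} (S : Set (X →₀ ℝ)) : Prop :=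
  S.Nonempty ∧ (∀ d ∈ S, IsDist d) ∧
    ∃ F : Finset (X →₀ ℝ), S = convexHull ℝ (F : Set (X →₀ ℝ))

def IsDistC {X : Type*} (Φ : Set (X →₀ ℝ) →₀ ℝ) : Prop :=
  IsDist Φ ∧ ∀ U ∈ Φ.support, InC U

def InCC {X : Type*} (S : Set (Set (X →₀ ℝ) →₀ ℝ)) : Prop :=
  S.Nonempty ∧ (∀ Φ ∈ S, IsDistC Φ) ∧
    ∃ F : Finset (Set (X →₀ ℝ) →₀ ℝ), S = convexHull ℝ (F : Set (Set (X →₀ ℝ) →₀ ℝ))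

def mu {X : Type*} (S : Set (Set (X →₀ ℝ) →₀ ℝ)) : Set (X →₀ ℝ) :=
  ⋃ Φ ∈ S, {d | ∃ g : Set (X →₀ ℝ) → (X →₀ ℝ),
    (∀ U ∈ Φ.support, g U ∈ U) ∧ d = ∑ U ∈ Φ.support, Φ U • g U}

open Finset Pointwise

theorem sel_insert' {E ι : Type*} [AddCommGroup E] [Module ℝ E] [DecidableEq ι]
    {U₀ : ι} {F : Finset ι} (hU₀ : U₀ ∉ F) (w : ι → ℝ) (c : ι → Set E) :
    {d | ∃ g : ι → E, (∀ U ∈ insert U₀ F, g U ∈ c U) ∧ d = ∑ U ∈ insert U₀ F, w U • g U}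
      = (w U₀ • c U₀) + {d | ∃ g : ι → E, (∀ U ∈ F, g U ∈ c U) ∧ d = ∑ U ∈ F, w U • g U} := by
  ext d
  constructor
  · rintro ⟨g, hg, rfl⟩
    refine ⟨w U₀ • g U₀, ⟨g U₀, hg _ (mem_insert_self _ _), rfl⟩,
      ∑ U ∈ F, w U • g U, ⟨g, fun U hU => hg U (mem_insert_of_mem hU), rfl⟩, ?_⟩
    rw [Finset.sum_insert hU₀]
  · rintro ⟨a, ⟨x, hx, rfl⟩, b, ⟨g, hg, rfl⟩, rfl⟩
    refine ⟨Function.update g U₀ x, ?_, ?_⟩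
    · intro U hU
      rcases Finset.mem_insert.1 hU with rfl | hU
      · simpa using hx
      · rw [Function.update_of_ne (fun h => hU₀ (by rw [← h]; exact hU))]
        exact hg U hU
    · rw [Finset.sum_insert hU₀, Function.update_self]
      congr 1
      exact Finset.sum_congr rfl fun U hU => by
        rw [Function.update_of_ne (fun h => hU₀ (by rw [← h]; exact hU))]

theorem sel_convexHull' {E ι : Type*} [AddCommGroup E] [Module ℝ E]
    (F : Finset ι) (w : ι → ℝ) (c b : ι → Set E)
    (hcb : ∀ U ∈ F, c U = convexHull ℝ (b U)) :
    {d | ∃ g : ι → E, (∀ U ∈ F, g U ∈ c U) ∧ d = ∑ U ∈ F, w U • g U}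
      = convexHull ℝ {d | ∃ g : ι → E, (∀ U ∈ F, g U ∈ b U) ∧ d = ∑ U ∈ F, w U • g U} := by
  classical
  induction F using Finset.induction with
  | empty =>
    have h : ∀ c' : ι → Set E,
        {d | ∃ g : ι → E, (∀ U ∈ (∅ : Finset ι), g U ∈ c' U) ∧ d = ∑ U ∈ (∅ : Finset ι), w U • g U}
          = {(0 : E)} := by
      intro c'
      ext d
      simp [eq_comm]
    rw [h c, h b, convexHull_singleton]
  | @insert U₀ F hU₀ ih =>
    rw [sel_insert' hU₀ w c, sel_insert' hU₀ w b,
      ih (fun U hU => hcb U (mem_insert_of_mem hU)),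
      hcb U₀ (mem_insert_self _ _), ← convexHull_smul, ← convexHull_add]

theorem mu_convex {X : Type*} (S : Set (Set (X →₀ ℝ) →₀ ℝ)) (hS : InCC S) :
    Convex ℝ (mu S) := by
  classical
  obtain ⟨-, hSd, F, hSF⟩ := hS
  have hSconv : Convex ℝ S := hSF ▸ convex_convexHull ℝ _
  intro d1 hd1 d2 hd2 t s ht hs hts
  rcases eq_or_lt_of_le ht with rfl | ht
  · simp only [zero_add] at hts; subst hts; simpa using hd2
  rcases eq_or_lt_of_le hs with rfl | hs
  · simp only [add_zero] at hts; subst hts; simpa using hd1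
  simp only [mu, Set.mem_iUnion, Set.mem_setOf_eq] at hd1 hd2 ⊢
  obtain ⟨Φ, hΦS, g, hg, rfl⟩ := hd1
  obtain ⟨Ψ, hΨS, h, hh, rfl⟩ := hd2
  have hΦ0 : ∀ U, 0 ≤ Φ U := (hSd Φ hΦS).1.1
  have hΨ0 : ∀ U, 0 ≤ Ψ U := (hSd Ψ hΨS).1.1
  set χ : Set (X →₀ ℝ) →₀ ℝ := t • Φ + s • Ψ with hχ
  have hχS : χ ∈ S := hSconv hΦS hΨS ht.le hs.le hts
  have hχ0 : ∀ U, 0 ≤ χ U := (hSd χ hχS).1.1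
  have hχapp : ∀ U, χ U = t * Φ U + s * Ψ U := fun U => by
    simp [hχ, Finsupp.add_apply, Finsupp.smul_apply]
  have hsubΦ : Φ.support ⊆ χ.support := by
    intro U hU
    rw [Finsupp.mem_support_iff] at hU ⊢
    have hpos : 0 < Φ U := lt_of_le_of_ne (hΦ0 U) (Ne.symm hU)
    have : 0 < χ U := by
      rw [hχapp]
      exact add_pos_of_pos_of_nonneg (mul_pos ht hpos) (mul_nonneg hs.le (hΨ0 U))
    exact this.ne'
  have hsubΨ : Ψ.support ⊆ χ.support := by
    intro U hU
    rw [Finsupp.mem_support_iff] at hU ⊢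
    have hpos : 0 < Ψ U := lt_of_le_of_ne (hΨ0 U) (Ne.symm hU)
    have : 0 < χ U := by
      rw [hχapp]
      exact add_pos_of_nonneg_of_pos (mul_nonneg ht.le (hΦ0 U)) (mul_pos hs hpos)
    exact this.ne'
  set pick : Set (X →₀ ℝ) → (X →₀ ℝ) :=
    fun U => if hU : U.Nonempty then hU.some else 0 with hpickdef
  have hpick : ∀ U ∈ χ.support, pick U ∈ U := by
    intro U hU
    have hne : U.Nonempty := ((hSd χ hχS).2 U hU).1
    rw [hpickdef]
    simp only [dif_pos hne]
    exact hne.some_mem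
  set g' : Set (X →₀ ℝ) → (X →₀ ℝ) := fun U => if Φ U = 0 then pick U else g U with hg'def
  set h' : Set (X →₀ ℝ) → (X →₀ ℝ) := fun U => if Ψ U = 0 then pick U else h U with hh'def
  have hg'mem : ∀ U ∈ χ.support, g' U ∈ U := by
    intro U hU
    by_cases hΦU : Φ U = 0
    · simp only [hg'def, if_pos hΦU]; exact hpick U hU
    · simp only [hg'def, if_neg hΦU]; exact hg U (Finsupp.mem_support_iff.2 hΦU)
  have hh'mem : ∀ U ∈ χ.support, h' U ∈ U := by
    intro U hU
    by_cases hΨU : Ψ U = 0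
    · simp only [hh'def, if_pos hΨU]; exact hpick U hU
    · simp only [hh'def, if_neg hΨU]; exact hh U (Finsupp.mem_support_iff.2 hΨU)
  have hUconv : ∀ U ∈ χ.support, Convex ℝ U := by
    intro U hU
    obtain ⟨-, -, FU, hFU⟩ := (hSd χ hχS).2 U hU
    exact hFU ▸ convex_convexHull ℝ _
  set k : Set (X →₀ ℝ) → (X →₀ ℝ) :=
    fun U => ((t * Φ U) / χ U) • g' U + ((s * Ψ U) / χ U) • h' U with hkdef
  have hχpos : ∀ U ∈ χ.support, 0 < χ U := fun U hU =>
    lt_of_le_of_ne (hχ0 U) (Ne.symm (Finsupp.mem_support_iff.1 hU))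
  have hk : ∀ U ∈ χ.support, k U ∈ U := by
    intro U hU
    have hχU := hχpos U hU
    refine hUconv U hU (hg'mem U hU) (hh'mem U hU)
      (div_nonneg (mul_nonneg ht.le (hΦ0 U)) hχU.le)
      (div_nonneg (mul_nonneg hs.le (hΨ0 U)) hχU.le) ?_
    rw [← add_div, ← hχapp, div_self hχU.ne']
  refine ⟨χ, hχS, k, hk, ?_⟩
  have hterm : ∀ U ∈ χ.support, χ U • k U = (t * Φ U) • g' U + (s * Ψ U) • h' U := by
    intro U hU
    have hne := (hχpos U hU).ne'
    rw [hkdef]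
    simp only [smul_add, smul_smul]
    rw [mul_comm (χ U) _, div_mul_cancel₀ _ hne, mul_comm (χ U) _, div_mul_cancel₀ _ hne]
  rw [Finset.sum_congr rfl hterm, Finset.sum_add_distrib]
  congr 1
  · have h1 : t • ∑ U ∈ Φ.support, Φ U • g U = ∑ U ∈ Φ.support, (t * Φ U) • g' U := by
      rw [Finset.smul_sum]
      refine Finset.sum_congr rfl fun U hU => ?_
      rw [smul_smul]
      congr 1
      simp only [hg'def, if_neg (Finsupp.mem_support_iff.1 hU)]
    rw [h1]
    exact Finset.sum_subset hsubΦ fun U _ hU => by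
      simp [Finsupp.notMem_support_iff.1 hU]
  · have h1 : s • ∑ U ∈ Ψ.support, Ψ U • h U = ∑ U ∈ Ψ.support, (s * Ψ U) • h' U := by
      rw [Finset.smul_sum]
      refine Finset.sum_congr rfl fun U hU => ?_
      rw [smul_smul]
      congr 1
      simp only [hh'def, if_neg (Finsupp.mem_support_iff.1 hU)]
    rw [h1]
    exact Finset.sum_subset hsubΨ fun U _ hU => by
      simp [Finsupp.notMem_support_iff.1 hU]

/-- `μ(S)` is generated by combining the unique bases at both levels:
`μ(S) = conv(⋃_{Φ ∈ UB(S)} { Σ_U Φ(U)·d : d ∈ UB(U) })`. -/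
theorem mu_via_bases {X : Type*} (S : Set (Set (X →₀ ℝ) →₀ ℝ)) (hS : InCC S)
    (B : Set (Set (X →₀ ℝ) →₀ ℝ)) (hB : IsBase S B)
    (ub : Set (X →₀ ℝ) → Set (X →₀ ℝ)) (hub : ∀ U, InC U → IsBase U (ub U)) :
    mu S = convexHull ℝ {d | ∃ Φ ∈ B, ∃ g : Set (X →₀ ℝ) → (X →₀ ℝ),
      (∀ U ∈ Φ.support, g U ∈ ub U) ∧ d = ∑ U ∈ Φ.support, Φ U • g U} := by
  classical
  set T := {d | ∃ Φ ∈ B, ∃ g : Set (X →₀ ℝ) → (X →₀ ℝ),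
      (∀ U ∈ Φ.support, g U ∈ ub U) ∧ d = ∑ U ∈ Φ.support, Φ U • g U} with hTdef
  obtain ⟨hBfin, hSB, -⟩ := hB
  have hBS : B ⊆ S := hSB ▸ subset_convexHull ℝ B
  have hSd := hS.2.1
  have hUbase : ∀ U, InC U → U = convexHull ℝ (ub U) := fun U hU => (hub U hU).2.1
  apply Set.Subset.antisymm
  · intro d hd
    simp only [mu, Set.mem_iUnion, Set.mem_setOf_eq] at hd
    obtain ⟨Φ, hΦS, g, hg, rfl⟩ := hd
    have hΦmem : Φ ∈ convexHull ℝ B := hSB ▸ hΦS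
    rw [_root_.convexHull_eq] at hΦmem
    obtain ⟨ι, tset, wgt, z, hw0, hw1, hzB, hcm⟩ := hΦmem
    rw [Finset.centerMass_eq_of_sum_1 _ _ hw1] at hcm
    set t' := tset.filter (fun i => wgt i ≠ 0) with ht'
    have hw1' : ∑ i ∈ t', wgt i = 1 := by
      rw [ht', Finset.sum_filter_ne_zero]; exact hw1
    have hw0' : ∀ i ∈ t', 0 ≤ wgt i := fun i hi => hw0 i (Finset.mem_of_mem_filter i hi)
    have hzB' : ∀ i ∈ t', z i ∈ B := fun i hi => hzB i (Finset.mem_of_mem_filter i hi)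
    have hz0 : ∀ i ∈ t', ∀ U, 0 ≤ z i U := fun i hi =>
      (hSd (z i) (hBS (hzB' i hi))).1.1
    have hΦsum : ∀ U, Φ U = ∑ i ∈ t', wgt i * z i U := by
      intro U
      have h1 : Φ U = ∑ i ∈ tset, wgt i * z i U := by
        rw [← hcm, Finset.sum_apply']
        simp [Finsupp.smul_apply]
      rw [h1]
      refine (Finset.sum_filter_of_ne fun i _ hne => ?_).symm
      intro hw; rw [hw] at hne; simp at hne
    have hsupp : ∀ i ∈ t', (z i).support ⊆ Φ.support := by
      intro i hi U hU
      rw [Finsupp.mem_support_iff] at hU ⊢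
      have hwpos : 0 < wgt i :=
        lt_of_le_of_ne (hw0' i hi) (Ne.symm (Finset.mem_filter.1 hi).2)
      have hzpos : 0 < z i U := lt_of_le_of_ne (hz0 i hi U) (Ne.symm hU)
      have hge : wgt i * z i U ≤ Φ U := by
        rw [hΦsum U]
        exact Finset.single_le_sum
          (fun j hj => mul_nonneg (hw0' j hj) (hz0 j hj U)) hi
      exact (lt_of_lt_of_le (mul_pos hwpos hzpos) hge).ne'
    have hc : ∀ U ∈ Φ.support, U = convexHull ℝ (ub U) := fun U hU =>
      hUbase U ((hSd Φ hΦS).2 U hU)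
    have he : ∀ i ∈ t',
        (∑ U ∈ Φ.support, z i U • g U) ∈ convexHull ℝ T := by
      intro i hi
      have hmem : (∑ U ∈ Φ.support, z i U • g U) ∈
          {d | ∃ g0 : Set (X →₀ ℝ) → (X →₀ ℝ),
            (∀ U ∈ Φ.support, g0 U ∈ U) ∧ d = ∑ U ∈ Φ.support, (fun U => z i U) U • g0 U} :=
        ⟨g, hg, rfl⟩
      rw [sel_convexHull' Φ.support (fun U => z i U) (fun U => U) ub hc] at hmem
      refine convexHull_mono ?_ hmem
      rintro d' ⟨h0, hh0, rfl⟩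
      refine ⟨z i, hzB' i hi, h0, fun U hU => hh0 U (hsupp i hi hU), ?_⟩
      exact (Finset.sum_subset (hsupp i hi) fun U _ hU => by
        simp [Finsupp.notMem_support_iff.1 hU]).symm
    have hdec : ∑ U ∈ Φ.support, Φ U • g U
        = ∑ i ∈ t', wgt i • ∑ U ∈ Φ.support, z i U • g U := by
      calc ∑ U ∈ Φ.support, Φ U • g U
          = ∑ U ∈ Φ.support, ∑ i ∈ t', (wgt i * z i U) • g U := by
            refine Finset.sum_congr rfl fun U _ => ?_
            rw [hΦsum U, Finset.sum_smul]
        _ = ∑ i ∈ t', ∑ U ∈ Φ.support, (wgt i * z i U) • g U := Finset.sum_comm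
        _ = ∑ i ∈ t', wgt i • ∑ U ∈ Φ.support, z i U • g U := by
            refine Finset.sum_congr rfl fun i _ => ?_
            rw [Finset.smul_sum]
            exact Finset.sum_congr rfl fun U _ => (mul_smul _ _ _)
    rw [hdec]
    exact (convex_convexHull ℝ T).sum_mem hw0' hw1' he
  · refine convexHull_min ?_ (mu_convex S hS)
    rintro d ⟨Φ, hΦB, g, hg, rfl⟩
    have hΦS := hBS hΦB
    simp only [mu, Set.mem_iUnion, Set.mem_setOf_eq]
    refine ⟨Φ, hΦS, g, fun U hU => ?_, rfl⟩
    have hsub : ub U ⊆ U := by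
      conv_rhs => rw [hUbase U ((hSd Φ hΦS).2 U hU)]
      exact subset_convexHull ℝ _
    exact hsub (hg U hU)
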